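/- Assume additionally (Monotonicity) W1 ≥ W0 P-almost surely. Then for every y ∈ ℝ, the intent-to-treat effect on the distributional outcome 1{Y ≤ y} equals the complier contribution: E[1{Y ≤ y} | Z = 1] − E[1{Y ≤ y} | Z = 0] = E[(1{Y1 ≤ y} − 1{Y0 ≤ y})·1_C]. -/

import Mathlib

open MeasureTheory ProbabilityTheory

lemma ind_eq_indicator {Ω : Type*} (p : Ω → Prop) [DecidablePred p] :
    (fun ω => if p ω then (1 : ℝ) else 0) = Set.indicator {ω | p ω} (fun _ => 1) := by
  ext ω
  by_cases h : p ω <;> simp [Set.indicator_apply, h]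

lemma ind_integrable {Ω : Type*} [MeasurableSpace Ω] (P : Measure Ω) [IsFiniteMeasure P]
    (p : Ω → Prop) [DecidablePred p] (hp : MeasurableSet {ω | p ω}) :
    Integrable (fun ω => if p ω then (1 : ℝ) else 0) P := by
  rw [ind_eq_indicator]
  exact (integrable_const 1).indicator hp

lemma ind_integral {Ω : Type*} [MeasurableSpace Ω] (P : Measure Ω) [IsFiniteMeasure P]
    (p : Ω → Prop) [DecidablePred p] (hp : MeasurableSet {ω | p ω}) :
    ∫ ω, (if p ω then (1 : ℝ) else 0) ∂P = (P {ω | p ω}).toReal := by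
  rw [ind_eq_indicator, integral_indicator_const _ hp, smul_eq_mul, mul_one]
  rfl

/-- Conditional mean given an event: `E[U | A] := E[U · 1_A] / P(A)`. -/
noncomputable def condMean {Ω : Type*} [MeasurableSpace Ω] (P : Measure Ω)
    (U : Ω → ℝ) (A : Set Ω) : ℝ :=
  (∫ ω in A, U ω ∂P) / (P A).toReal

/-- The intent-to-treat effect on the distributional outcome `1{Y ≤ y}` equals the complier
contribution `E[(1{Y1 ≤ y} − 1{Y0 ≤ y})·1_C]`. -/
theorem itt_distributional_effect_equals_complier_contribution
    {Ω : Type*} [MeasurableSpace Ω] (P : Measure Ω) [IsProbabilityMeasure P]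
    (Z W0 W1 Y0 Y1 : Ω → ℝ)
    (hZ : Measurable Z) (hW0 : Measurable W0) (hW1 : Measurable W1)
    (hY0 : Measurable Y0) (hY1 : Measurable Y1)
    (hZbin : ∀ ω, Z ω = 0 ∨ Z ω = 1)
    (hW0bin : ∀ ω, W0 ω = 0 ∨ W0 ω = 1)
    (hW1bin : ∀ ω, W1 ω = 0 ∨ W1 ω = 1)
    (W Y : Ω → ℝ)
    (hWdef : ∀ ω, W ω = Z ω * W1 ω + (1 - Z ω) * W0 ω)
    (hYdef : ∀ ω, Y ω = W ω * Y1 ω + (1 - W ω) * Y0 ω)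
    (hindep : IndepFun Z (fun ω => (Y0 ω, Y1 ω, W0 ω, W1 ω)) P)
    (hoverlap : 0 < P {ω | Z ω = 1} ∧ P {ω | Z ω = 1} < 1)
    (hmono : ∀ᵐ ω ∂P, W0 ω ≤ W1 ω) :
    ∀ y : ℝ,
      condMean P (fun ω => if Y ω ≤ y then (1 : ℝ) else 0) {ω | Z ω = 1}
        - condMean P (fun ω => if Y ω ≤ y then (1 : ℝ) else 0) {ω | Z ω = 0}
      = ∫ ω in {ω | W0 ω < W1 ω},
          ((if Y1 ω ≤ y then (1 : ℝ) else 0) - (if Y0 ω ≤ y then (1 : ℝ) else 0)) ∂P := by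
  intro y
  classical
  set g1 : Ω → ℝ := fun ω => if W1 ω * Y1 ω + (1 - W1 ω) * Y0 ω ≤ y then 1 else 0 with hg1def
  set g0 : Ω → ℝ := fun ω => if W0 ω * Y1 ω + (1 - W0 ω) * Y0 ω ≤ y then 1 else 0 with hg0def
  have hs1 : MeasurableSet {ω | Z ω = 1} := hZ (measurableSet_singleton 1)
  have hs0 : MeasurableSet {ω | Z ω = 0} := hZ (measurableSet_singleton 0)
  have hg1set : MeasurableSet {ω | W1 ω * Y1 ω + (1 - W1 ω) * Y0 ω ≤ y} :=
    measurableSet_le ((hW1.mul hY1).add ((measurable_const.sub hW1).mul hY0)) measurable_const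
  have hg0set : MeasurableSet {ω | W0 ω * Y1 ω + (1 - W0 ω) * Y0 ω ≤ y} :=
    measurableSet_le ((hW0.mul hY1).add ((measurable_const.sub hW0).mul hY0)) measurable_const
  have hg1i : Integrable g1 P := ind_integrable P _ hg1set
  have hg0i : Integrable g0 P := ind_integrable P _ hg0set
  -- generic step: conditional mean given `Z = z` equals `E[g]`
  have key : ∀ (z : ℝ) (g : Ω → ℝ) (ψ : ℝ × ℝ × ℝ × ℝ → ℝ), Measurable ψ →
      (∀ ω, g ω = ψ (Y0 ω, Y1 ω, W0 ω, W1 ω)) → Integrable g P →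
      (∀ ω, Z ω = z → (if Y ω ≤ y then (1 : ℝ) else 0) = g ω) →
      P {ω | Z ω = z} ≠ 0 →
      condMean P (fun ω => if Y ω ≤ y then (1 : ℝ) else 0) {ω | Z ω = z} = ∫ ω, g ω ∂P := by
    intro z g ψ hψ hgψ hgi hYg hne
    have hsz : MeasurableSet {ω | Z ω = z} := hZ (measurableSet_singleton z)
    have h1 : ∫ ω in {ω | Z ω = z}, (if Y ω ≤ y then (1 : ℝ) else 0) ∂P
        = ∫ ω in {ω | Z ω = z}, g ω ∂P :=
      setIntegral_congr_fun hsz (fun ω hω => hYg ω hω)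
    -- independence step
    set φ : ℝ → ℝ := fun x => if x = z then 1 else 0 with hφdef
    have hφ : Measurable φ := measurable_const.ite (measurableSet_eq) measurable_const
    have hind : IndepFun (φ ∘ Z) (ψ ∘ fun ω => (Y0 ω, Y1 ω, W0 ω, W1 ω)) P :=
      hindep.comp hφ hψ
    have hφZi : Integrable (φ ∘ Z) P := ind_integrable P (fun ω => Z ω = z) hsz
    have hgeq : (ψ ∘ fun ω => (Y0 ω, Y1 ω, W0 ω, W1 ω)) = g := by
      ext ω; exact (hgψ ω).symm
    rw [hgeq] at hind
    have hmul : ∫ ω, ((φ ∘ Z) * g) ω ∂P = (∫ ω, (φ ∘ Z) ω ∂P) * ∫ ω, g ω ∂P :=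
      IndepFun.integral_mul_eq_mul_integral hind hφZi.aestronglyMeasurable hgi.aestronglyMeasurable
    have h2 : ∫ ω in {ω | Z ω = z}, g ω ∂P = ∫ ω, ((φ ∘ Z) * g) ω ∂P := by
      rw [← integral_indicator hsz]
      congr 1
      ext ω
      by_cases h : Z ω = z <;> simp [Set.indicator_apply, h, hφdef]
    have h3 : ∫ ω, (φ ∘ Z) ω ∂P = (P {ω | Z ω = z}).toReal :=
      ind_integral P (fun ω => Z ω = z) hsz
    have htr : (P {ω | Z ω = z}).toReal ≠ 0 := by
      simp [ENNReal.toReal_ne_zero, hne, measure_ne_top]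
    rw [condMean, h1, h2, hmul, h3]
    field_simp
  -- Z = 1 case
  have hψ1 : Measurable (fun v : ℝ × ℝ × ℝ × ℝ => if v.2.2.2 * v.2.1 + (1 - v.2.2.2) * v.1 ≤ y then (1:ℝ) else 0) := by
    apply Measurable.ite _ measurable_const measurable_const
    apply measurableSet_le _ measurable_const
    fun_prop
  have hψ0 : Measurable (fun v : ℝ × ℝ × ℝ × ℝ => if v.2.2.1 * v.2.1 + (1 - v.2.2.1) * v.1 ≤ y then (1:ℝ) else 0) := by
    apply Measurable.ite _ measurable_const measurable_const
    apply measurableSet_le _ measurable_const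
    fun_prop
  have hkey1 := key 1 g1 _ hψ1 (fun ω => rfl) hg1i
    (fun ω hω => by
      have hw : W ω = W1 ω := by rw [hWdef, hω]; ring
      rw [hYdef, hw])
    (ne_of_gt hoverlap.1)
  have hne0 : P {ω | Z ω = 0} ≠ 0 := by
    have hcompl : {ω | Z ω = 0} = {ω | Z ω = 1}ᶜ := by
      ext ω
      rcases hZbin ω with h | h <;> simp [h]
    rw [hcompl, measure_compl hs1 (measure_ne_top _ _), measure_univ]
    intro h
    rw [tsub_eq_zero_iff_le] at h
    exact absurd h (not_le.mpr hoverlap.2)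
  have hkey0 := key 0 g0 _ hψ0 (fun ω => rfl) hg0i
    (fun ω hω => by
      have hw : W ω = W0 ω := by rw [hWdef, hω]; ring
      rw [hYdef, hw])
    hne0
  rw [hkey1, hkey0]
  -- final: E[g1] - E[g0] = complier integral
  have hC : MeasurableSet {ω | W0 ω < W1 ω} := measurableSet_lt hW0 hW1
  rw [← integral_sub hg1i hg0i, ← integral_indicator hC]
  apply integral_congr_ae
  filter_upwards [hmono] with ω hω
  rcases hW0bin ω with h0 | h0 <;> rcases hW1bin ω with h1 | h1
  · simp [hg1def, hg0def, Set.indicator_apply, h0, h1]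
  · simp [hg1def, hg0def, Set.indicator_apply, h0, h1]
  · rw [h0, h1] at hω; linarith
  · simp [hg1def, hg0def, Set.indicator_apply, h0, h1]
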